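/- Let f : [0,a] × ℝⁿ → ℝⁿ be continuous and suppose there exists η > 1 such that ‖f(t,u) + ηu − f(t,v) − ηv‖ ≤ ‖u − v‖ for all t ∈ [0,a] and u,v ∈ ℝⁿ (sup norm ‖·‖ on ℝⁿ). Then the periodic problem u′(t) = f(t,u(t)) on [0,a] with u(0) = u(a) has a unique solution u ∈ C([0,a],ℝⁿ). -/

import Mathlib

open Filter Topology

/-- The partial order `z₁ ≼ z₂` on `ℂ`: componentwise on real and imaginary parts. -/
def cle (z w : ℂ) : Prop := z.re ≤ w.re ∧ z.im ≤ w.im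

/-- The strict order `z₁ ≺ z₂` on `ℂ`: strict inequalities in both components. -/
def clt (z w : ℂ) : Prop := z.re < w.re ∧ z.im < w.im

/-- A complex valued metric on `X`. -/
structure IsCVMetric {X : Type*} (d : X → X → ℂ) : Prop where
  nonneg : ∀ x y, cle 0 (d x y)
  eq_zero_iff : ∀ x y, d x y = 0 ↔ x = y
  symm : ∀ x y, d x y = d y x
  triangle : ∀ x y z, cle (d x y) (d x z + d z y)

/-- Cauchy sequence in a complex valued metric space. -/
def CVCauchy {X : Type*} (d : X → X → ℂ) (u : ℕ → X) : Prop :=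
  ∀ c : ℂ, clt 0 c → ∃ n₀ : ℕ, ∀ n > n₀, ∀ m > n₀, clt (d (u n) (u m)) c

/-- Convergence of a sequence in a complex valued metric space. -/
def CVConv {X : Type*} (d : X → X → ℂ) (u : ℕ → X) (x : X) : Prop :=
  ∀ c : ℂ, clt 0 c → ∃ n₀ : ℕ, ∀ n > n₀, clt (d (u n) x) c

/-- Completeness: every Cauchy sequence converges (moduli of distances tend to 0). -/
def CVComplete {X : Type*} (d : X → X → ℂ) : Prop :=
  ∀ u : ℕ → X, CVCauchy d u →
    ∃ x : X, Tendsto (fun n => ‖d (u n) x‖) atTop (𝓝 0)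

/-- Componentwise `limsup` of a sequence of complex numbers. -/
noncomputable def climsup (z : ℕ → ℂ) : ℂ :=
  ⟨limsup (fun n => (z n).re) atTop, limsup (fun n => (z n).im) atTop⟩

/-- A `ℂ`-simulation function. -/
def IsCSimulation (ξ : ℂ → ℂ → ℂ) : Prop :=
  ξ 0 0 = 0 ∧
  (∀ t s : ℂ, cle 0 t → t ≠ 0 → cle 0 s → s ≠ 0 →
    cle (ξ t s) (s - t) ∧ ξ t s ≠ s - t) ∧
  (∀ tn sn : ℕ → ℂ, (∀ n, cle 0 (tn n) ∧ tn n ≠ 0) → (∀ n, cle 0 (sn n) ∧ sn n ≠ 0) →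
    ∀ L : ℝ, 0 < L →
    Tendsto (fun n => ‖tn n‖) atTop (𝓝 L) →
    Tendsto (fun n => ‖sn n‖) atTop (𝓝 L) →
    cle (climsup (fun n => ξ ((‖tn n‖ : ℝ)) ((‖sn n‖ : ℝ)))) 0 ∧
    climsup (fun n => ξ ((‖tn n‖ : ℝ)) ((‖sn n‖ : ℝ))) ≠ 0)

namespace Stmt18Aux
open MeasureTheory Set Function intervalIntegral

variable {n : ℕ}

/-- The integrand `s ↦ e^{ηs}(f(s,u(s)) + η u(s))`, extended to all of `ℝ` via `projIcc`. -/
noncomputable def G (a η : ℝ) (ha : 0 ≤ a) (f : ℝ → (Fin n → ℝ) → (Fin n → ℝ))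
    (u : C(Icc (0:ℝ) a, Fin n → ℝ)) (s : ℝ) : Fin n → ℝ :=
  Real.exp (η * s) •
    (f (projIcc 0 a ha s : ℝ) (u (projIcc 0 a ha s)) + η • u (projIcc 0 a ha s))

theorem contG (a η : ℝ) (ha : 0 ≤ a) (f : ℝ → (Fin n → ℝ) → (Fin n → ℝ))
    (hf : ContinuousOn (uncurry f) (Icc 0 a ×ˢ univ))
    (u : C(Icc (0:ℝ) a, Fin n → ℝ)) : Continuous (G a η ha f u) := by
  have hproj : Continuous fun s : ℝ => projIcc 0 a ha s := continuous_projIcc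
  have hu : Continuous fun s : ℝ => u (projIcc 0 a ha s) := u.continuous.comp hproj
  have h1 : Continuous fun s : ℝ => f (projIcc 0 a ha s : ℝ) (u (projIcc 0 a ha s)) := by
    exact hf.comp_continuous
      (((continuous_subtype_val.comp hproj)).prodMk hu)
      (fun s => ⟨(projIcc 0 a ha s).2, mem_univ _⟩)
  exact (Real.continuous_exp.comp (continuous_const.mul continuous_id)).smul
    (h1.add (hu.const_smul η))

theorem int_exp (η : ℝ) (hη : 0 < η) (t : ℝ) :
    ∫ s in (0:ℝ)..t, Real.exp (η * s) = (Real.exp (η * t) - 1) / η := by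
  have key : ∀ s : ℝ, HasDerivAt (fun x => Real.exp (η * x) / η) (Real.exp (η * s)) s := by
    intro s
    have h := (Real.hasDerivAt_exp (η * s)).comp s ((hasDerivAt_id s).const_mul η)
    have h2 := h.div_const η
    simpa [mul_one, mul_div_assoc, mul_div_cancel_right₀ _ (ne_of_gt hη)] using h2
  rw [intervalIntegral.integral_eq_sub_of_hasDerivAt (fun s _ => key s)
    ((Real.continuous_exp.comp (continuous_const.mul continuous_id)).intervalIntegrable 0 t)]
  rw [mul_zero, Real.exp_zero]
  ring

theorem normG_sub_le (a η : ℝ) (ha : 0 ≤ a) (f : ℝ → (Fin n → ℝ) → (Fin n → ℝ))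
    (hlip : ∀ t ∈ Icc (0:ℝ) a, ∀ u v : Fin n → ℝ,
      ‖f t u + η • u - f t v - η • v‖ ≤ ‖u - v‖)
    (u v : C(Icc (0:ℝ) a, Fin n → ℝ)) (s : ℝ) :
    ‖G a η ha f u s - G a η ha f v s‖ ≤ Real.exp (η * s) * dist u v := by
  set p := projIcc 0 a ha s with hp
  have h1 : G a η ha f u s - G a η ha f v s =
      Real.exp (η * s) • ((f (p : ℝ) (u p) + η • u p) - (f (p : ℝ) (v p) + η • v p)) := by
    rw [smul_sub]; rfl
  rw [h1, norm_smul, Real.norm_eq_abs, abs_of_pos (Real.exp_pos _)]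
  have h2 : (f (p : ℝ) (u p) + η • u p) - (f (p : ℝ) (v p) + η • v p) =
      f (p : ℝ) (u p) + η • u p - f (p : ℝ) (v p) - η • v p := by abel
  rw [h2]
  have h3 := hlip (p : ℝ) p.2 (u p) (v p)
  have h4 : ‖u p - v p‖ ≤ dist u v := by
    rw [← dist_eq_norm]; exact ContinuousMap.dist_apply_le_dist p
  exact mul_le_mul_of_nonneg_left (h3.trans h4) (Real.exp_pos _).le

theorem normIntG_sub_le (a η : ℝ) (ha : 0 ≤ a) (hη : 0 < η)
    (f : ℝ → (Fin n → ℝ) → (Fin n → ℝ))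
    (hf : ContinuousOn (uncurry f) (Icc 0 a ×ˢ univ))
    (hlip : ∀ t ∈ Icc (0:ℝ) a, ∀ u v : Fin n → ℝ,
      ‖f t u + η • u - f t v - η • v‖ ≤ ‖u - v‖)
    (u v : C(Icc (0:ℝ) a, Fin n → ℝ)) (t : ℝ) (ht : 0 ≤ t) :
    ‖(∫ s in (0:ℝ)..t, G a η ha f u s) - ∫ s in (0:ℝ)..t, G a η ha f v s‖ ≤
      (Real.exp (η * t) - 1) / η * dist u v := by
  rw [← intervalIntegral.integral_sub ((contG a η ha f hf u).intervalIntegrable 0 t)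
    ((contG a η ha f hf v).intervalIntegrable 0 t)]
  have hb : ‖∫ s in (0:ℝ)..t, (G a η ha f u s - G a η ha f v s)‖ ≤
      |∫ s in (0:ℝ)..t, Real.exp (η * s) * dist u v| := by
    refine intervalIntegral.norm_integral_le_abs_of_norm_le ?_ ?_
    · exact ae_of_all _ fun s => normG_sub_le a η ha f hlip u v s
    · exact ((Real.continuous_exp.comp (continuous_const.mul continuous_id)).mul
        continuous_const).intervalIntegrable 0 t
  refine hb.trans ?_
  rw [intervalIntegral.integral_mul_const, int_exp η hη]
  have h1 : (1:ℝ) ≤ Real.exp (η * t) := by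
    rw [← Real.exp_zero]; exact Real.exp_le_exp.2 (by positivity)
  have hD : (0:ℝ) ≤ dist u v := dist_nonneg
  rw [abs_of_nonneg (mul_nonneg (div_nonneg (by linarith) hη.le) hD)]

/-- The contraction map `T`. -/
noncomputable def T (a η : ℝ) (ha : 0 ≤ a) (f : ℝ → (Fin n → ℝ) → (Fin n → ℝ))
    (hf : ContinuousOn (uncurry f) (Icc 0 a ×ˢ univ))
    (u : C(Icc (0:ℝ) a, Fin n → ℝ)) : C(Icc (0:ℝ) a, Fin n → ℝ) :=
  ⟨fun t => Real.exp (-(η * (t : ℝ))) •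
      ((Real.exp (η * a) - 1)⁻¹ • (∫ s in (0:ℝ)..a, G a η ha f u s) +
        ∫ s in (0:ℝ)..(t : ℝ), G a η ha f u s), by
    have hGi : ∀ b c : ℝ, IntervalIntegrable (G a η ha f u) volume b c :=
      fun b c => (contG a η ha f hf u).intervalIntegrable b c
    have h1 : Continuous fun t : ℝ => ∫ s in (0:ℝ)..t, G a η ha f u s :=
      intervalIntegral.continuous_primitive hGi 0
    have h2 : Continuous fun t : Icc (0:ℝ) a => Real.exp (-(η * (t : ℝ))) :=
      Real.continuous_exp.comp ((continuous_const.mul continuous_subtype_val).neg)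
    exact h2.smul (continuous_const.add (h1.comp continuous_subtype_val))⟩

theorem T_dist_le (a η : ℝ) (ha : 0 < a) (hη : 0 < η)
    (f : ℝ → (Fin n → ℝ) → (Fin n → ℝ))
    (hf : ContinuousOn (uncurry f) (Icc 0 a ×ˢ univ))
    (hlip : ∀ t ∈ Icc (0:ℝ) a, ∀ u v : Fin n → ℝ,
      ‖f t u + η • u - f t v - η • v‖ ≤ ‖u - v‖)
    (u v : C(Icc (0:ℝ) a, Fin n → ℝ)) :
    dist (T a η ha.le f hf u) (T a η ha.le f hf v) ≤ η⁻¹ * dist u v := by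
  have hD : (0:ℝ) ≤ dist u v := dist_nonneg
  rw [ContinuousMap.dist_le (by positivity)]
  rintro ⟨t, ht0, hta⟩
  rw [dist_eq_norm]
  have hea : (1:ℝ) < Real.exp (η * a) := by
    rw [← Real.exp_zero]; exact Real.exp_lt_exp.2 (by positivity)
  set Iu := ∫ s in (0:ℝ)..a, G a η ha.le f u s
  set Iv := ∫ s in (0:ℝ)..a, G a η ha.le f v s
  set Pu := ∫ s in (0:ℝ)..t, G a η ha.le f u s
  set Pv := ∫ s in (0:ℝ)..t, G a η ha.le f v s
  have hdiff : T a η ha.le f hf u ⟨t, ht0, hta⟩ - T a η ha.le f hf v ⟨t, ht0, hta⟩ =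
      Real.exp (-(η * t)) •
        ((Real.exp (η * a) - 1)⁻¹ • (Iu - Iv) + (Pu - Pv)) := by
    show Real.exp (-(η * t)) • ((Real.exp (η * a) - 1)⁻¹ • Iu + Pu) -
        Real.exp (-(η * t)) • ((Real.exp (η * a) - 1)⁻¹ • Iv + Pv) = _
    rw [← smul_sub, smul_sub ((Real.exp (η * a) - 1)⁻¹)]
    congr 1
    abel
  rw [hdiff, norm_smul, Real.norm_eq_abs, abs_of_pos (Real.exp_pos _)]
  have hIa : ‖Iu - Iv‖ ≤ (Real.exp (η * a) - 1) / η * dist u v :=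
    normIntG_sub_le a η ha.le hη f hf hlip u v a ha.le
  have hPt : ‖Pu - Pv‖ ≤ (Real.exp (η * t) - 1) / η * dist u v :=
    normIntG_sub_le a η ha.le hη f hf hlip u v t ht0
  have hstep : ‖(Real.exp (η * a) - 1)⁻¹ • (Iu - Iv) + (Pu - Pv)‖ ≤
      η⁻¹ * dist u v + (Real.exp (η * t) - 1) / η * dist u v := by
    refine (norm_add_le _ _).trans (add_le_add ?_ hPt)
    have hinv : (0:ℝ) < (Real.exp (η * a) - 1)⁻¹ := inv_pos.2 (by linarith)
    rw [norm_smul, Real.norm_eq_abs, abs_of_pos hinv]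
    calc (Real.exp (η * a) - 1)⁻¹ * ‖Iu - Iv‖ ≤
          (Real.exp (η * a) - 1)⁻¹ * ((Real.exp (η * a) - 1) / η * dist u v) := by
            exact mul_le_mul_of_nonneg_left hIa (by positivity)
        _ = η⁻¹ * dist u v := by
            have h1 : Real.exp (η * a) - 1 ≠ 0 := by linarith
            field_simp
  calc Real.exp (-(η * t)) * ‖(Real.exp (η * a) - 1)⁻¹ • (Iu - Iv) + (Pu - Pv)‖ ≤
      Real.exp (-(η * t)) *
        (η⁻¹ * dist u v + (Real.exp (η * t) - 1) / η * dist u v) :=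
        mul_le_mul_of_nonneg_left hstep (Real.exp_pos _).le
    _ = η⁻¹ * dist u v := by
        have hE : Real.exp (-(η * t)) * Real.exp (η * t) = 1 := by
          rw [← Real.exp_add]; simp
        have hne : η ≠ 0 := ne_of_gt hη
        field_simp
        linear_combination (dist u v) * hE

end Stmt18Aux

open MeasureTheory in
theorem stmt18' (n : ℕ) (a : ℝ) (ha : 0 < a) (f : ℝ → (Fin n → ℝ) → (Fin n → ℝ))
    (hf : ContinuousOn (Function.uncurry f) (Set.Icc 0 a ×ˢ Set.univ))
    (η : ℝ) (hη : 1 < η)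
    (hlip : ∀ t ∈ Set.Icc (0:ℝ) a, ∀ u v : Fin n → ℝ,
      ‖f t u + η • u - f t v - η • v‖ ≤ ‖u - v‖) :
    ∃ u : ℝ → (Fin n → ℝ),
      (ContinuousOn u (Set.Icc 0 a) ∧
        (∀ t ∈ Set.Icc (0:ℝ) a, HasDerivWithinAt u (f t (u t)) (Set.Icc 0 a) t) ∧
        u 0 = u a) ∧
      ∀ v : ℝ → (Fin n → ℝ),
        (ContinuousOn v (Set.Icc 0 a) ∧
          (∀ t ∈ Set.Icc (0:ℝ) a, HasDerivWithinAt v (f t (v t)) (Set.Icc 0 a) t) ∧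
          v 0 = v a) →
        Set.EqOn v u (Set.Icc 0 a) := by
  classical
  have ha' : (0:ℝ) ≤ a := ha.le
  have hη0 : (0:ℝ) < η := lt_trans one_pos hη
  have hEt : ∀ r : ℝ, Real.exp (-(η * r)) * Real.exp (η * r) = 1 := by
    intro r; rw [← Real.exp_add]; simp
  have hea : (1:ℝ) < Real.exp (η * a) := by
    rw [← Real.exp_zero]; exact Real.exp_lt_exp.2 (by positivity)
  have hne1 : Real.exp (η * a) - 1 ≠ 0 := by linarith
  haveI : Nonempty C(Set.Icc (0:ℝ) a, Fin n → ℝ) := ⟨ContinuousMap.const _ 0⟩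
  have hcontr : ContractingWith (Real.toNNReal η⁻¹) (Stmt18Aux.T a η ha' f hf) := by
    constructor
    · rw [← NNReal.coe_lt_coe, Real.coe_toNNReal _ (by positivity), NNReal.coe_one]
      exact inv_lt_one_of_one_lt₀ hη
    · apply LipschitzWith.of_dist_le_mul
      intro u v
      have h := Stmt18Aux.T_dist_le a η ha hη0 f hf hlip u v
      rwa [Real.coe_toNNReal _ (by positivity)]
  set u₀ := ContractingWith.fixedPoint (Stmt18Aux.T a η ha' f hf) hcontr with hu₀def
  have hfix : Stmt18Aux.T a η ha' f hf u₀ = u₀ := hcontr.fixedPoint_isFixedPt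
  set G0 : ℝ → Fin n → ℝ := Stmt18Aux.G a η ha' f u₀ with hG0
  have hG0c : Continuous G0 := Stmt18Aux.contG a η ha' f hf u₀
  set cc : Fin n → ℝ := (Real.exp (η * a) - 1)⁻¹ • ∫ s in (0:ℝ)..a, G0 s with hcc
  set Φ : ℝ → Fin n → ℝ :=
    fun t => Real.exp (-(η * t)) • (cc + ∫ s in (0:ℝ)..t, G0 s) with hΦ
  have hfixapp : ∀ x : Set.Icc (0:ℝ) a, u₀ x = Φ (x : ℝ) := by
    intro x
    conv_lhs => rw [← hfix]
    rfl
  set U : ℝ → Fin n → ℝ := fun t => u₀ (Set.projIcc 0 a ha' t) with hUdef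
  have hUeq : ∀ t ∈ Set.Icc (0:ℝ) a, U t = Φ t := by
    intro t ht
    show u₀ (Set.projIcc 0 a ha' t) = Φ t
    rw [Set.projIcc_of_mem ha' ht]
    exact hfixapp ⟨t, ht⟩
  have hΦd : ∀ t ∈ Set.Icc (0:ℝ) a, HasDerivAt Φ (f t (U t)) t := by
    intro t ht
    have hP : HasDerivAt (fun r => ∫ s in (0:ℝ)..r, G0 s) (G0 t) t :=
      intervalIntegral.integral_hasDerivAt_right (hG0c.intervalIntegrable 0 t)
        (hG0c.stronglyMeasurableAtFilter _ _) hG0c.continuousAt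
    have hexp : HasDerivAt (fun r : ℝ => Real.exp (-(η * r)))
        (Real.exp (-(η * t)) * (-η)) t := by
      have h := (Real.hasDerivAt_exp (-(η * t))).comp t
        (((hasDerivAt_id t).const_mul η).neg)
      simpa [Function.comp_def] using h
    have hd := hexp.smul ((hasDerivAt_const t cc).add hP)
    have hGt : G0 t = Real.exp (η * t) • (f t (U t) + η • U t) := by
      rw [hG0]
      unfold Stmt18Aux.G
      rw [Set.projIcc_of_mem ha' ht]
      show _ = Real.exp (η * t) • (f t (u₀ (Set.projIcc 0 a ha' t)) +
        η • u₀ (Set.projIcc 0 a ha' t))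
      rw [Set.projIcc_of_mem ha' ht]
    refine hd.congr_deriv ?_
    simp only [Pi.add_apply]
    rw [zero_add, hGt, smul_smul, hEt t, one_smul]
    have h2 : (Real.exp (-(η * t)) * (-η)) • (cc + ∫ s in (0:ℝ)..t, G0 s)
        = (-η) • U t := by
      rw [hUeq t ht, hΦ, mul_comm, mul_smul]
    rw [h2]
    simp only [neg_smul]
    abel
  have hUd : ∀ t ∈ Set.Icc (0:ℝ) a, HasDerivWithinAt U (f t (U t)) (Set.Icc 0 a) t := by
    intro t ht
    exact ((hΦd t ht).hasDerivWithinAt).congr (fun y hy => hUeq y hy) (hUeq t ht)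
  have hU0 : U 0 = cc := by
    rw [hUeq 0 ⟨le_rfl, ha'⟩, hΦ]
    simp
  have hUa : U a = cc := by
    rw [hUeq a ⟨ha', le_rfl⟩]
    show Real.exp (-(η * a)) • (cc + ∫ s in (0:ℝ)..a, G0 s) = cc
    have hPa : (∫ s in (0:ℝ)..a, G0 s) = (Real.exp (η * a) - 1) • cc := by
      rw [hcc, smul_smul, mul_inv_cancel₀ hne1, one_smul]
    rw [hPa]
    have h3 : cc + (Real.exp (η * a) - 1) • cc = Real.exp (η * a) • cc := by
      rw [sub_smul, one_smul]; abel
    rw [h3, smul_smul, hEt a, one_smul]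
  refine ⟨U, ⟨(u₀.continuous.comp continuous_projIcc).continuousOn, hUd,
    hU0.trans hUa.symm⟩, ?_⟩
  rintro v ⟨hvc, hvd, hvper⟩
  set V : C(Set.Icc (0:ℝ) a, Fin n → ℝ) := ⟨fun x => v x, hvc.restrict⟩ with hVdef
  have hGV : Continuous (Stmt18Aux.G a η ha' f V) := Stmt18Aux.contG a η ha' f hf V
  have hFTC : ∀ t ∈ Set.Icc (0:ℝ) a,
      (∫ s in (0:ℝ)..t, Stmt18Aux.G a η ha' f V s)
        = Real.exp (η * t) • v t - v 0 := by
    rintro t ⟨ht0, hta⟩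
    have hψc : ContinuousOn (fun s => Real.exp (η * s) • v s) (Set.Icc 0 t) :=
      ((Real.continuous_exp.comp (continuous_const.mul continuous_id)).continuousOn).smul
        (hvc.mono (Set.Icc_subset_Icc le_rfl hta))
    have hψd : ∀ x ∈ Set.Ioo (0:ℝ) t, HasDerivWithinAt (fun s => Real.exp (η * s) • v s)
        (Stmt18Aux.G a η ha' f V x) (Set.Ioi x) x := by
      intro x hx
      have hxI : x ∈ Set.Icc (0:ℝ) a := ⟨hx.1.le, hx.2.le.trans hta⟩
      have hxn : Set.Icc (0:ℝ) a ∈ 𝓝 x := Icc_mem_nhds hx.1 (lt_of_lt_of_le hx.2 hta)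
      have hvx : HasDerivAt v (f x (v x)) x := (hvd x hxI).hasDerivAt hxn
      have hexp : HasDerivAt (fun r : ℝ => Real.exp (η * r)) (Real.exp (η * x) * η) x := by
        have h := (Real.hasDerivAt_exp (η * x)).comp x ((hasDerivAt_id x).const_mul η)
        simpa [Function.comp_def] using h
      have hd := hexp.smul hvx
      have heq : Real.exp (η * x) • (f x (v x)) + (Real.exp (η * x) * η) • v x
          = Stmt18Aux.G a η ha' f V x := by
        unfold Stmt18Aux.G
        rw [Set.projIcc_of_mem ha' hxI]
        show _ = Real.exp (η * x) • (f x (v x) + η • v x)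
        rw [smul_add, smul_smul]
      exact (heq ▸ hd).hasDerivWithinAt
    rw [intervalIntegral.integral_eq_sub_of_hasDeriv_right_of_le ht0 hψc hψd
      (hGV.intervalIntegrable 0 t)]
    simp
  have hVfix : Function.IsFixedPt (Stmt18Aux.T a η ha' f hf) V := by
    apply ContinuousMap.ext
    rintro ⟨t, ht⟩
    show Real.exp (-(η * t)) •
        ((Real.exp (η * a) - 1)⁻¹ • (∫ s in (0:ℝ)..a, Stmt18Aux.G a η ha' f V s) +
          ∫ s in (0:ℝ)..t, Stmt18Aux.G a η ha' f V s) = v t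
    rw [hFTC a ⟨ha', le_rfl⟩, hFTC t ht]
    have h1 : Real.exp (η * a) • v a - v 0 = (Real.exp (η * a) - 1) • v 0 := by
      rw [← hvper, sub_smul, one_smul]
    rw [h1, inv_smul_smul₀ hne1]
    have h2 : v 0 + (Real.exp (η * t) • v t - v 0) = Real.exp (η * t) • v t := by abel
    rw [h2, smul_smul, hEt t, one_smul]
  have hVu : V = u₀ := hcontr.fixedPoint_unique hVfix
  intro t ht
  show v t = U t
  have h4 : v t = V ⟨t, ht⟩ := rfl
  rw [h4, hVu]
  show u₀ ⟨t, ht⟩ = u₀ (Set.projIcc 0 a ha' t)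
  rw [Set.projIcc_of_mem ha' ht]


theorem stmt18 (n : ℕ) (a : ℝ) (ha : 0 < a) (f : ℝ → (Fin n → ℝ) → (Fin n → ℝ))
    (hf : ContinuousOn (Function.uncurry f) (Set.Icc 0 a ×ˢ Set.univ))
    (η : ℝ) (hη : 1 < η)
    (hlip : ∀ t ∈ Set.Icc (0:ℝ) a, ∀ u v : Fin n → ℝ,
      ‖f t u + η • u - f t v - η • v‖ ≤ ‖u - v‖) :
    ∃ u : ℝ → (Fin n → ℝ),
      (ContinuousOn u (Set.Icc 0 a) ∧
        (∀ t ∈ Set.Icc (0:ℝ) a, HasDerivWithinAt u (f t (u t)) (Set.Icc 0 a) t) ∧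
        u 0 = u a) ∧
      ∀ v : ℝ → (Fin n → ℝ),
        (ContinuousOn v (Set.Icc 0 a) ∧
          (∀ t ∈ Set.Icc (0:ℝ) a, HasDerivWithinAt v (f t (v t)) (Set.Icc 0 a) t) ∧
          v 0 = v a) →
        Set.EqOn v u (Set.Icc 0 a) :=
  stmt18' n a ha f hf η hη hlip
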